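/- Let L ⊆ K be fields such that L is relatively algebraically closed in K and K is a finite algebraic extension of a simple transcendental extension L(y). Then for any prime p, every p-high element of K belongs to L. -/

import Mathlib

open Polynomial IntermediateField
set_option synthInstance.maxHeartbeats 1000000
set_option maxHeartbeats 2000000

open Polynomial IntermediateField

/-- In `L(x)` with `x` transcendental over `L`, `x` has no `p`-th root. -/
lemma no_pth_root {K : Type*} [Field K] (L : Subfield K) {x : K}
    (hx : Transcendental L x) {p : ℕ} (hp : p.Prime) {b : K}
    (hb : b ∈ IntermediateField.adjoin L {x}) : b ^ p ≠ x := by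
  intro hbp
  have hx0 : x ≠ 0 := by
    intro h
    exact hx (h ▸ isAlgebraic_zero)
  obtain ⟨r, s, hrs⟩ := (IntermediateField.mem_adjoin_simple_iff L b).mp hb
  rw [hrs] at hbp
  have hinj : Function.Injective (Polynomial.aeval (R := L) x) :=
    transcendental_iff_injective.mp hx
  have hs0 : Polynomial.aeval x s ≠ 0 := by
    intro h
    rw [h, div_zero, zero_pow hp.ne_zero] at hbp
    exact hx0 hbp.symm
  have hr0 : Polynomial.aeval x r ≠ 0 := by
    intro h
    rw [h, zero_div, zero_pow hp.ne_zero] at hbp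
    exact hx0 hbp.symm
  rw [div_pow] at hbp
  have key2 : (Polynomial.aeval x r) ^ p = x * (Polynomial.aeval x s) ^ p :=
    (div_eq_iff (pow_ne_zero _ hs0)).mp hbp
  have key : (Polynomial.aeval x) (r ^ p) = (Polynomial.aeval x) (Polynomial.X * s ^ p) := by
    rw [map_pow, map_mul, map_pow, Polynomial.aeval_X]
    exact key2
  have heq : r ^ p = Polynomial.X * s ^ p := hinj key
  have hrne : r ≠ 0 := fun h => hr0 (by rw [h]; simp)
  have hsne : s ≠ 0 := fun h => hs0 (by rw [h]; simp)
  have hdeg := congrArg Polynomial.natDegree heq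
  rw [Polynomial.natDegree_pow, Polynomial.natDegree_mul Polynomial.X_ne_zero
    (pow_ne_zero p hsne), Polynomial.natDegree_X, Polynomial.natDegree_pow] at hdeg
  have hdvd : p ∣ 1 := by
    have h1 : p ∣ 1 + p * s.natDegree := hdeg ▸ Dvd.intro _ rfl
    rwa [add_comm, Nat.dvd_add_right (Dvd.intro _ rfl)] at h1
  exact hp.ne_one (Nat.dvd_one.mp hdvd)


lemma exchange {K : Type*} [Field K] (L : Subfield K) {t y : K}
    (hy : Transcendental L y) (ht : Transcendental L t)
    (hty : IsAlgebraic (IntermediateField.adjoin L {y}) t) :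
    IsAlgebraic (IntermediateField.adjoin L {t}) y := by
  by_contra hT
  have h1 : Transcendental (Algebra.adjoin L ({t} : Set K)) y := by
    intro h
    have hle : Algebra.adjoin L ({t} : Set K) ≤ (IntermediateField.adjoin L {t}).toSubalgebra :=
      Algebra.adjoin_le (Set.singleton_subset_iff.mpr (IntermediateField.mem_adjoin_simple_self L t))
    exact hT (h.tower_top_of_subalgebra_le hle)
  have hsingt : AlgebraicIndependent L (fun _ : Unit => t) :=
    algebraicIndependent_unique_type_iff.mpr ht
  have hpair : AlgebraicIndependent L (fun o : Option Unit => o.elim y fun _ => t) := by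
    rw [hsingt.option_iff_transcendental, Set.range_const]
    exact h1
  have hswap : AlgebraicIndependent L (fun o : Option Unit => o.elim t fun _ => y) := by
    have h2 := hpair.comp (Equiv.swap (none : Option Unit) (some ()))
      (Equiv.swap (none : Option Unit) (some ())).injective
    convert h2 using 1
    funext o
    match o with
    | none => simp
    | some () => simp
  have hsingy : AlgebraicIndependent L (fun _ : Unit => y) :=
    algebraicIndependent_unique_type_iff.mpr hy
  have h3 : Transcendental (Algebra.adjoin L (Set.range fun _ : Unit => y)) t :=
    (hsingy.option_iff_transcendental t).mp hswap
  rw [Set.range_const] at h3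
  apply h3
  -- now show t algebraic over the ring adjoin, via fraction ring
  have hAle : Algebra.adjoin L ({y} : Set K) ≤ (IntermediateField.adjoin L {y}).toSubalgebra :=
    Algebra.adjoin_le (Set.singleton_subset_iff.mpr (IntermediateField.mem_adjoin_simple_self L y))
  letI : Algebra (Algebra.adjoin L ({y} : Set K)) (IntermediateField.adjoin L {y}) :=
    (Subalgebra.inclusion hAle).toAlgebra
  haveI : IsScalarTower (Algebra.adjoin L ({y} : Set K)) (IntermediateField.adjoin L {y}) K :=
    IsScalarTower.of_algebraMap_eq' rfl
  haveI : IsFractionRing (Algebra.adjoin L ({y} : Set K)) (IntermediateField.adjoin L {y}) := by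
    refine (isLocalization_iff _ _).mpr ⟨?map_units', ?surj', ?exists_of_eq⟩
    case map_units' =>
      rintro ⟨z, hz⟩
      rw [isUnit_iff_ne_zero]
      intro h0
      have : (z : K) = 0 := congrArg Subtype.val h0
      have hz0 : z = 0 := Subtype.ext this
      rw [hz0] at hz
      exact zero_notMem_nonZeroDivisors hz
    case surj' => 
      rintro ⟨z, hz⟩
      obtain ⟨r, s, hrs⟩ := (IntermediateField.mem_adjoin_simple_iff L z).mp hz
      have hr : Polynomial.aeval y r ∈ Algebra.adjoin L ({y} : Set K) := by
        rw [Algebra.adjoin_singleton_eq_range_aeval]; exact ⟨r, rfl⟩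
      have hs : Polynomial.aeval y s ∈ Algebra.adjoin L ({y} : Set K) := by
        rw [Algebra.adjoin_singleton_eq_range_aeval]; exact ⟨s, rfl⟩
      by_cases h0 : Polynomial.aeval y s = 0
      · refine ⟨⟨0, 1⟩, ?_⟩
        have : z = 0 := by rw [hrs, h0, div_zero]
        apply Subtype.ext
        show z * _ = _
        simp [this]
      · refine ⟨⟨⟨Polynomial.aeval y r, hr⟩, ⟨⟨Polynomial.aeval y s, hs⟩,
          mem_nonZeroDivisors_of_ne_zero (fun h => h0 (congrArg Subtype.val h))⟩⟩, ?_⟩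
        apply Subtype.ext
        show z * Polynomial.aeval y s = Polynomial.aeval y r
        rw [hrs, div_mul_cancel₀ _ h0]
    case exists_of_eq =>
      intro a b h
      refine ⟨1, ?_⟩
      have h2 : ((algebraMap _ (IntermediateField.adjoin L {y}) a : IntermediateField.adjoin L {y}) : K) = ((algebraMap _ (IntermediateField.adjoin L {y}) b : IntermediateField.adjoin L {y}) : K) := congrArg Subtype.val h
      have : a = b := Subtype.ext h2
      simp [this]
  exact (IsFractionRing.isAlgebraic_iff (Algebra.adjoin L ({y} : Set K))
    (IntermediateField.adjoin L {y}) K).mpr hty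

lemma findim_lemma {K : Type*} [Field K] (L : Subfield K) {t y : K}
    (hy : Transcendental L y) (ht : Transcendental L t)
    [FiniteDimensional (IntermediateField.adjoin L {y}) K] :
    FiniteDimensional (IntermediateField.adjoin L {t}) K := by
  have hty : IsAlgebraic (IntermediateField.adjoin L {y}) t := IsAlgebraic.of_finite _ t
  have halg : IsAlgebraic (IntermediateField.adjoin L {t}) y := exchange L hy ht hty
  haveI hM1 : FiniteDimensional (IntermediateField.adjoin L {t})
      (IntermediateField.adjoin (IntermediateField.adjoin L {t}) {y} :
        IntermediateField (IntermediateField.adjoin L {t}) K) :=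
    IntermediateField.adjoin.finiteDimensional halg.isIntegral
  haveI hM2 : FiniteDimensional
      (IntermediateField.adjoin (IntermediateField.adjoin L {t}) {y} :
        IntermediateField (IntermediateField.adjoin L {t}) K) K := by
    set M := (IntermediateField.adjoin (IntermediateField.adjoin L {t}) {y} :
        IntermediateField (IntermediateField.adjoin L {t}) K)
    have hle : IntermediateField.adjoin L {y} ≤ M.restrictScalars L := by
      rw [IntermediateField.adjoin_le_iff]
      refine Set.singleton_subset_iff.mpr ?_
      show y ∈ M.restrictScalars L
      exact IntermediateField.mem_adjoin_simple_self _ y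
    letI : Algebra (IntermediateField.adjoin L {y}) (M.restrictScalars L) :=
      (IntermediateField.inclusion hle).toAlgebra
    haveI : IsScalarTower (IntermediateField.adjoin L {y}) (M.restrictScalars L) K :=
      IsScalarTower.of_algebraMap_eq' rfl
    have h : FiniteDimensional (M.restrictScalars L) K :=
      Module.Finite.of_restrictScalars_finite (IntermediateField.adjoin L {y}) _ K
    exact h
  exact FiniteDimensional.trans (IntermediateField.adjoin L {t})
    (IntermediateField.adjoin (IntermediateField.adjoin L {t}) {y} :
        IntermediateField (IntermediateField.adjoin L {t}) K) K



/-- An element `x` of a field `F` is `p`-high if there is a sequence `(x_i)_{i<ω}` with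
`x₀ = x` and `x_{i+1}^p = x_i` for all `i`. -/
def IsHigh {F : Type*} [Field F] (p : ℕ) (x : F) : Prop :=
  ∃ s : ℕ → F, s 0 = x ∧ ∀ i, s (i + 1) ^ p = s i

/-- Let `L ⊆ K` be fields with `L` relatively algebraically closed in `K` and `K` a
finite algebraic extension of a simple transcendental extension `L(y)`.  Then for any
prime `p`, every `p`-high element of `K` belongs to `L`. -/
theorem stmt13 {K : Type*} [Field K] (L : Subfield K)
    (hrac : ∀ x : K, x ∉ L → Transcendental L x)
    (y : K) (hy : Transcendental L y)
    (hfin : FiniteDimensional (IntermediateField.adjoin L {y}) K)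
    (p : ℕ) (hp : p.Prime) (x : K) (hx : IsHigh p x) : x ∈ L := by
  by_contra hxL
  obtain ⟨s, hs0, hsp⟩ := hx
  have hnotL : ∀ i, s i ∉ L := by
    intro i
    induction i with
    | zero => rwa [hs0]
    | succ n ih => exact fun h => ih (hsp n ▸ pow_mem h p)
  have htr : ∀ i, Transcendental L (s i) := fun i => hrac _ (hnotL i)
  have hnm : ∀ i, s (i + 1) ∉ IntermediateField.adjoin L {s i} :=
    fun i h => no_pth_root L (htr i) hp h (hsp i)
  have hle : ∀ i, IntermediateField.adjoin L {s i} ≤ IntermediateField.adjoin L {s (i + 1)} := by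
    intro i
    rw [IntermediateField.adjoin_simple_le_iff]
    exact hsp i ▸ pow_mem (IntermediateField.mem_adjoin_simple_self L (s (i + 1))) p
  have h0 : ∀ i, IntermediateField.adjoin L {s 0} ≤ IntermediateField.adjoin L {s i} := by
    intro i
    induction i with
    | zero => exact le_rfl
    | succ n ih => exact ih.trans (hle n)
  haveI := hfin
  haveI hF : FiniteDimensional (IntermediateField.adjoin L {s 0}) K :=
    findim_lemma L hy (htr 0)
  set F := IntermediateField.adjoin L {s 0} with hFdef
  let N : ℕ → Submodule F K := fun i => (IntermediateField.extendScalars (h0 i)).toSubmodule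
  have hltN : ∀ i, N i < N (i + 1) := by
    intro i
    apply lt_of_le_of_ne
    · intro z hz
      exact hle i hz
    · intro hEq
      apply hnm i
      have hmem : s (i + 1) ∈ N (i + 1) :=
        IntermediateField.mem_adjoin_simple_self L (s (i + 1))
      rw [← hEq] at hmem
      exact hmem
  have hmono : StrictMono fun i => Module.finrank F (N i) :=
    strictMono_nat_of_lt_succ fun i => Submodule.finrank_lt_finrank_of_lt (hltN i)
  have hub : ∀ i, Module.finrank F (N i) ≤ Module.finrank F K :=
    fun i => Submodule.finrank_le _
  have hge : ∀ i, i ≤ Module.finrank F (N i) := fun i => hmono.le_apply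
  have := hge (Module.finrank F K + 1)
  have := hub (Module.finrank F K + 1)
  omega
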